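/- Let r ≤ n, let V ⊆ ℝ^r be a nonempty connected open set, and let f : ℝ^r → ℝⁿ be twice differentiable on V with D(Df)(x) = 0 for all x ∈ V, and suppose Df(x₀) is injective for some x₀ ∈ V. Then there exist a continuous linear equivalence B : ℝⁿ ≃ ℝⁿ and constants c_{r}, …, c_{n−1} ∈ ℝ such that for every x ∈ V and every index A with r ≤ A < n, the A-th coordinate of B(f(x)) equals c_A. (Hessian submanifolds are embedded, and there is a thermodynamic representation serving as a slice coordinate chart for them.) -/

import Mathlib

open Set

/-- A differentiable function with zero derivative on an open preconnected set
takes the same value at any two points of the set. -/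
lemma apply_eq_of_fderiv_eq_zero
    {E F : Type*} [NormedAddCommGroup E] [NormedSpace ℝ E]
    [NormedAddCommGroup F] [NormedSpace ℝ F]
    {V : Set E} (hV : IsOpen V) (hconn : IsPreconnected V)
    {g : E → F} (hg : DifferentiableOn ℝ g V)
    (hg' : ∀ x ∈ V, fderiv ℝ g x = 0)
    {a b : E} (ha : a ∈ V) (hb : b ∈ V) : g a = g b := by
  -- local constancy: around any point of V, g is constant on a ball
  have hloc : ∀ x ∈ V, ∀ᶠ y in nhds x, g y = g x := by
    intro x hx
    obtain ⟨ε, hε, hball⟩ := Metric.isOpen_iff.1 hV x hx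
    filter_upwards [Metric.ball_mem_nhds x hε] with y hy
    refine (convex_ball x ε).is_const_of_fderivWithin_eq_zero
      (hg.mono hball) (fun z hz => ?_) hy (Metric.mem_ball_self hε)
    rw [fderivWithin_of_isOpen Metric.isOpen_ball hz]
    exact hg' z (hball hz)
  -- clopen argument
  classical
  by_contra hne
  set U1 : Set E := {x | x ∈ V ∧ g x = g a} with hU1def
  set U2 : Set E := {x | x ∈ V ∧ g x ≠ g a} with hU2def
  have hU1 : IsOpen U1 := by
    rw [isOpen_iff_eventually]
    rintro x ⟨hxV, hxg⟩
    filter_upwards [hloc x hxV, hV.eventually_mem hxV] with y hy hyV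
    exact ⟨hyV, hy.trans hxg⟩
  have hU2 : IsOpen U2 := by
    rw [isOpen_iff_eventually]
    rintro x ⟨hxV, hxg⟩
    filter_upwards [hloc x hxV, hV.eventually_mem hxV] with y hy hyV
    exact ⟨hyV, hy ▸ hxg⟩
  have hsub : V ⊆ U1 ∪ U2 := by
    intro x hx
    by_cases h : g x = g a
    · exact Or.inl ⟨hx, h⟩
    · exact Or.inr ⟨hx, h⟩
  have h1 : (V ∩ U1).Nonempty := ⟨a, ha, ha, rfl⟩
  have h2 : (V ∩ U2).Nonempty := ⟨b, hb, hb, fun h => hne h.symm⟩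
  obtain ⟨z, _, ⟨_, hz1⟩, ⟨_, hz2⟩⟩ := hconn U1 U2 hU1 hU2 hsub h1 h2
  exact hz2 hz1

/-- **Hessian submanifolds are embedded with slice thermodynamic
representations.** Let `r ≤ n`, let `f : ℝ^r → ℝⁿ` be twice differentiable on a
nonempty connected open set `V` with `D(Df) = 0` on `V` (an affine immersion
into affine coordinates) and suppose `Df(x₀)` is injective at some `x₀ ∈ V`.
Then there is a continuous linear equivalence `B` of `ℝⁿ` and constants
`c_A` (`r ≤ A < n`) such that the `A`-th coordinate of `B(f(x))` equals `c_A`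
for all `x ∈ V`: the linear coordinate change `B` produces a thermodynamic
representation that is a slice chart for the image of `f`. -/
theorem affine_immersion_has_linear_slice_chart
    (r n : ℕ) (hrn : r ≤ n)
    (V : Set (EuclideanSpace ℝ (Fin r))) (hV : IsOpen V)
    (hne : V.Nonempty) (hconn : IsPreconnected V)
    (f : EuclideanSpace ℝ (Fin r) → EuclideanSpace ℝ (Fin n))
    (hf : DifferentiableOn ℝ f V)
    (hf' : DifferentiableOn ℝ (fderiv ℝ f) V)
    (hf'' : ∀ x ∈ V, fderiv ℝ (fderiv ℝ f) x = 0)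
    (x₀ : EuclideanSpace ℝ (Fin r)) (hx₀ : x₀ ∈ V)
    (hinj : Function.Injective (fderiv ℝ f x₀)) :
    ∃ (B : EuclideanSpace ℝ (Fin n) ≃L[ℝ] EuclideanSpace ℝ (Fin n))
      (c : Fin n → ℝ),
      ∀ x ∈ V, ∀ A : Fin n, r ≤ (A : ℕ) → B (f x) A = c A := by
  classical
  set L : EuclideanSpace ℝ (Fin r) →L[ℝ] EuclideanSpace ℝ (Fin n) :=
    fderiv ℝ f x₀ with hLdef
  -- the derivative is constant on V
  have hLconst : ∀ y ∈ V, fderiv ℝ f y = L :=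
    fun y hy => (apply_eq_of_fderiv_eq_zero hV hconn hf' hf'' hy hx₀)
  -- f is affine on V : f x - L x is constant
  have haff : ∀ x ∈ V, f x = f x₀ + (L x - L x₀) := by
    intro x hx
    have hsub : DifferentiableOn ℝ (fun z => f z - L z) V :=
      hf.sub (L.differentiable.differentiableOn)
    have hzero : ∀ z ∈ V, fderiv ℝ (fun z => f z - L z) z = 0 := by
      intro z hz
      have hdf : DifferentiableAt ℝ f z :=
        (hf z hz).differentiableAt (hV.mem_nhds hz)
      rw [fderiv_fun_sub hdf (L.differentiable z), L.fderiv, hLconst z hz, sub_self]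
    have := apply_eq_of_fderiv_eq_zero hV hconn hsub hzero hx hx₀
    have h' : f x - L x = f x₀ - L x₀ := this
    abel_nf
    abel_nf at h'
    linear_combination (norm := abel) h'
  -- the inclusion ℝ^r → ℝⁿ onto the first r coordinates
  set er := WithLp.linearEquiv 2 ℝ (Fin r → ℝ) with her
  set en := WithLp.linearEquiv 2 ℝ (Fin n → ℝ) with hen
  set J : EuclideanSpace ℝ (Fin r) →ₗ[ℝ] EuclideanSpace ℝ (Fin n) :=
    en.symm.toLinearMap ∘ₗ
      (Function.ExtendByZero.linearMap ℝ (Fin.castLE hrn)) ∘ₗ er.toLinearMap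
    with hJdef
  have hcast : Function.Injective (Fin.castLE hrn) := Fin.castLE_injective hrn
  have hJapply : ∀ v A, J v A = Function.extend (Fin.castLE hrn) (er v) 0 A := by
    intro v A; rfl
  have hJzero : ∀ (v : EuclideanSpace ℝ (Fin r)) (A : Fin n),
      r ≤ (A : ℕ) → J v A = 0 := by
    intro v A hA
    rw [hJapply, Function.extend_apply' _ _ _ ?_]
    · rfl
    · rintro ⟨i, hi⟩
      have h1 : ((A : Fin n) : ℕ) = (i : ℕ) := by rw [← hi]; rfl
      have h2 := i.isLt
      omega
  have hJinj : Function.Injective J := by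
    intro u v huv
    have : Function.extend (Fin.castLE hrn) (er u) 0
        = Function.extend (Fin.castLE hrn) (er v) 0 := by
      have := congrArg en huv
      have h := this
      simp [hJdef] at h
      exact h
    ext i
    have := congrFun this (Fin.castLE hrn i)
    rwa [hcast.extend_apply, hcast.extend_apply] at this
  -- build the linear equivalence B
  have hLinj : Function.Injective (L : EuclideanSpace ℝ (Fin r) →ₗ[ℝ]
      EuclideanSpace ℝ (Fin n)) := hinj
  set W1 := LinearMap.range (L : EuclideanSpace ℝ (Fin r) →ₗ[ℝ]
      EuclideanSpace ℝ (Fin n)) with hW1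
  set W2 := LinearMap.range J with hW2
  obtain ⟨p1, hp1⟩ := Submodule.exists_isCompl W1
  obtain ⟨p2, hp2⟩ := Submodule.exists_isCompl W2
  have hfr1 : Module.finrank ℝ W1 = r := by
    rw [LinearMap.finrank_range_of_inj hLinj, finrank_euclideanSpace_fin]
  have hfr2 : Module.finrank ℝ W2 = r := by
    rw [LinearMap.finrank_range_of_inj hJinj, finrank_euclideanSpace_fin]
  have hfrp : Module.finrank ℝ p1 = Module.finrank ℝ p2 := by
    have h1 := Submodule.finrank_add_eq_of_isCompl hp1
    have h2 := Submodule.finrank_add_eq_of_isCompl hp2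
    omega
  set ep : p1 ≃ₗ[ℝ] p2 := LinearEquiv.ofFinrankEq _ _ hfrp with hep
  set eW : W1 ≃ₗ[ℝ] W2 :=
    (LinearEquiv.ofInjective _ hLinj).symm ≪≫ₗ (LinearEquiv.ofInjective J hJinj)
    with heW
  set glin : EuclideanSpace ℝ (Fin n) ≃ₗ[ℝ] EuclideanSpace ℝ (Fin n) :=
    (Submodule.prodEquivOfIsCompl W1 p1 hp1).symm ≪≫ₗ (eW.prodCongr ep) ≪≫ₗ
      (Submodule.prodEquivOfIsCompl W2 p2 hp2) with hglin
  have hkey : ∀ v, glin (L v) = J v := by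
    intro v
    set w1 : W1 := ⟨L v, LinearMap.mem_range_self _ v⟩ with hw1
    set w2 : W2 := ⟨J v, LinearMap.mem_range_self _ v⟩ with hw2
    have h1 : (Submodule.prodEquivOfIsCompl W1 p1 hp1).symm (L v)
        = (w1, 0) :=
      Submodule.prodEquivOfIsCompl_symm_apply_left (p := W1) (q := p1) hp1 w1
    have h2 : eW w1 = w2 := by
      have hv : (LinearEquiv.ofInjective _ hLinj).symm w1 = v := by
        apply (LinearEquiv.ofInjective _ hLinj).injective
        rw [LinearEquiv.apply_symm_apply]
        rfl
      rw [heW]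
      simp only [LinearEquiv.trans_apply, hv]
      rfl
    rw [hglin]
    simp only [LinearEquiv.trans_apply, h1, LinearEquiv.prodCongr_apply, h2, map_zero]
    show (J v : EuclideanSpace ℝ (Fin n)) + (0 : p2) = J v
    simp
  set B := glin.toContinuousLinearEquiv with hB
  refine ⟨B, fun A => B (f x₀) A, fun x hx A hA => ?_⟩
  have hfx := haff x hx
  have : B (f x) = B (f x₀) + (J x - J x₀) := by
    rw [hfx]
    have : glin (f x₀ + (L x - L x₀))
        = glin (f x₀) + (glin (L x) - glin (L x₀)) := by
      simp [map_add, map_sub]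
    show glin (f x₀ + (L x - L x₀)) = glin (f x₀) + (J x - J x₀)
    rw [this, hkey, hkey]
  rw [this]
  have hadd : (B (f x₀) + (J x - J x₀)) A
      = B (f x₀) A + (J x A - J x₀ A) := rfl
  rw [hadd, hJzero x A hA, hJzero x₀ A hA, sub_zero, add_zero]
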